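/- Let E be a finite-dimensional real inner product space, β, δ > 0, α ∈ (0, 1), ε ∈ (0, 1) with 2βδ(1 − 3α − ε) ≥ (1 − α)² and 2βδ > 1. Let Φ : E → E be self-adjoint with ⟨Φx, x⟩ ≥ δ‖x‖² for all x, Ā : E → E β-cocoercive, B̄ : E → Set E monotone, and suppose there exists ϖ* with −Ā(ϖ*) ∈ B̄(ϖ*). If (ϖ_k), (ϖ̃_k) satisfy ϖ̃_k = ϖ_k + α(ϖ_k − ϖ_{k−1}) and Φ(ϖ̃_k − ϖ_{k+1}) − Ā(ϖ̃_k) ∈ B̄(ϖ_{k+1}) for all k ≥ 1, then the sequence (ϖ_k) is bounded, Σ_{k=1}^∞ ‖ϖ_{k+1} − ϖ_k‖_Φ² < ∞, and in particular ϖ_{k+1} − ϖ_k → 0. -/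

import Mathlib

open scoped RealInnerProductSpace

/-- Under the step-size condition `2βδ(1 − 3α − ε) ≥ (1 − α)²`, `2βδ > 1`,
the inertial forward–backward sequence is bounded, the `Φ`-norm-squared increments are
summable, and consecutive differences tend to zero. -/
theorem inertial_forward_backward_summable_increments
    (E : Type*) [NormedAddCommGroup E] [InnerProductSpace ℝ E] [FiniteDimensional ℝ E]
    (β δ α ε : ℝ) (hβ : 0 < β) (hδ : 0 < δ)
    (hα0 : 0 < α) (hα1 : α < 1) (hε0 : 0 < ε) (hε1 : ε < 1)
    (hstep : (1 - α) ^ 2 ≤ 2 * β * δ * (1 - 3 * α - ε)) (hβδ : 1 < 2 * β * δ)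
    (Φ : E →ₗ[ℝ] E)
    (hsa : ∀ x y : E, ⟪Φ x, y⟫ = ⟪x, Φ y⟫)
    (hcoer : ∀ x : E, δ * ‖x‖ ^ 2 ≤ ⟪Φ x, x⟫)
    (A : E → E)
    (hco : ∀ x y : E, β * ‖A x - A y‖ ^ 2 ≤ ⟪x - y, A x - A y⟫)
    (B : E → Set E)
    (hmono : ∀ x y : E, ∀ u ∈ B x, ∀ v ∈ B y, 0 ≤ ⟪x - y, u - v⟫)
    (ϖstar : E) (hstar : -A ϖstar ∈ B ϖstar)
    (ϖ ϖt : ℕ → E)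
    (hinertia : ∀ k : ℕ, 1 ≤ k → ϖt k = ϖ k + α • (ϖ k - ϖ (k - 1)))
    (hseq : ∀ k : ℕ, 1 ≤ k → Φ (ϖt k - ϖ (k + 1)) - A (ϖt k) ∈ B (ϖ (k + 1))) :
    (∃ C : ℝ, ∀ k : ℕ, ‖ϖ k‖ ≤ C) ∧
      Summable (fun k : ℕ => ⟪Φ (ϖ (k + 1) - ϖ k), ϖ (k + 1) - ϖ k⟫) ∧
      Filter.Tendsto (fun k : ℕ => ϖ (k + 1) - ϖ k) Filter.atTop (nhds 0) := by
  -- Basic facts about the quadratic form x ↦ ⟪Φ x, x⟫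
  have hQ0 : ∀ x : E, (0:ℝ) ≤ ⟪Φ x, x⟫ := fun x => le_trans (by positivity) (hcoer x)
  have hsymm : ∀ x y : E, (⟪Φ x, y⟫:ℝ) = ⟪Φ y, x⟫ := fun x y => by
    rw [hsa x y, real_inner_comm]
  have hcomb : ∀ (c d : ℝ) (x y : E),
      (⟪Φ (c • x - d • y), c • x - d • y⟫:ℝ)
        = c^2 * ⟪Φ x, x⟫ - 2*c*d*⟪Φ x, y⟫ + d^2 * ⟪Φ y, y⟫ := by
    intro c d x y
    simp only [map_sub, map_smul, inner_sub_left, inner_sub_right,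
      real_inner_smul_left, real_inner_smul_right]
    rw [hsymm y x]
    ring
  have hcross : ∀ x y : E, 2*(⟪Φ x, y⟫:ℝ) ≤ ⟪Φ x, x⟫ + ⟪Φ y, y⟫ := by
    intro x y
    have h := hQ0 (x - y)
    have h2 := hcomb 1 1 x y
    simp only [one_smul, one_pow, one_mul, mul_one] at h2
    rw [h2] at h
    linarith
  -- notation
  set Qa : ℕ → ℝ := fun k => ⟪Φ (ϖ k - ϖstar), ϖ k - ϖstar⟫ with haDef
  set s : ℕ → ℝ := fun k => ⟪Φ (ϖ (k+1) - ϖ k), ϖ (k+1) - ϖ k⟫ with hsDef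
  have hQa0 : ∀ k, 0 ≤ Qa k := fun k => hQ0 _
  have hs0 : ∀ k, 0 ≤ s k := fun k => hQ0 _
  set σ : ℝ := 1 - 1/(2*β*δ) with hσdef
  have hσ0 : 0 ≤ σ := by
    have : 1/(2*β*δ) ≤ 1 := by rw [div_le_one (by positivity)]; linarith
    simp only [hσdef]; linarith
  set ρ : ℝ := α*(1+α) + σ*α*(1-α) with hρdef
  set γ : ℝ := σ*(1-α) with hγdef
  clear_value σ
  clear_value ρ γ
  have hρ0 : 0 ≤ ρ := by
    have h1 : 0 ≤ σ*α*(1-α) := by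
      apply mul_nonneg (mul_nonneg hσ0 hα0.le); linarith
    have h2 : 0 ≤ α*(1+α) := by nlinarith
    simp only [hρdef]; linarith
  have h2βδ : (0:ℝ) < 2*β*δ := by positivity
  have hγρ : ε ≤ γ - ρ := by
    have hσrel : σ * (2*β*δ) = 2*β*δ - 1 := by
      rw [hσdef]; field_simp
    have hexp : (γ - ρ) * (2*β*δ) = σ*(2*β*δ)*(1-α)^2 - (α + α^2)*(2*β*δ) := by
      rw [hγdef, hρdef]; ring
    have hkey2 : ε * (2*β*δ) ≤ (γ - ρ) * (2*β*δ) := by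
      rw [hexp, hσrel]; nlinarith [hstep]
    exact le_of_mul_le_mul_right hkey2 h2βδ
  -- key one-step inequality
  have hkey : ∀ k : ℕ, Qa (k+2) ≤ (1+α) * Qa (k+1) - α * Qa k + ρ * s k - γ * s (k+1) := by
    intro k
    have hin := hinertia (k+1) (Nat.le_add_left 1 k)
    simp only [Nat.add_sub_cancel] at hin
    have hBmem := hseq (k+1) (Nat.le_add_left 1 k)
    have hidx : k+1+1 = k+2 := rfl
    rw [hidx] at hBmem
    set t := ϖt (k+1) with ht
    set w := t - ϖ (k+2) with hw
    set e := A t - A ϖstar with he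
    clear_value t w e
    -- monotonicity consequence
    have hm := hmono (ϖ (k+2)) ϖstar _ hBmem _ hstar
    have hm' : (⟪ϖ (k+2) - ϖstar, e⟫:ℝ) ≤ ⟪ϖ (k+2) - ϖstar, Φ w⟫ := by
      have hrw : (Φ w - A t) - (-A ϖstar) = Φ w - e := by rw [he]; abel
      rw [hrw, inner_sub_right] at hm
      linarith
    -- cocoercivity and Cauchy–Schwarz/Young
    have hco' := hco t ϖstar
    have hdiv : ‖w‖ * ‖e‖ - β*‖e‖^2 ≤ ‖w‖^2/(4*β) := by
      rw [le_div_iff₀ (by positivity)]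
      nlinarith [sq_nonneg (‖w‖ - 2*β*‖e‖)]
    have hCS : (⟪w, e⟫:ℝ) ≤ β*‖e‖^2 + ‖w‖^2/(4*β) := by
      have h1 : (⟪w, e⟫:ℝ) ≤ ‖w‖ * ‖e‖ := real_inner_le_norm _ _
      linarith
    have hsplit : (⟪ϖ (k+2) - ϖstar, e⟫:ℝ) = ⟪t - ϖstar, e⟫ - ⟪w, e⟫ := by
      rw [← inner_sub_left]
      congr 1
      rw [hw]; abel
    have h4 : -(‖w‖^2/(4*β)) ≤ (⟪ϖ (k+2) - ϖstar, Φ w⟫:ℝ) := by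
      have h5 : β*‖e‖^2 ≤ (⟪t - ϖstar, e⟫:ℝ) := by rw [he]; exact hco'
      rw [hsplit] at hm'
      linarith
    -- quadratic expansion of Qa (k+2)
    have hz_id : Qa (k+2) = ⟪Φ (t - ϖstar), t - ϖstar⟫
        - 2*⟪ϖ (k+2) - ϖstar, Φ w⟫ - ⟪Φ w, w⟫ := by
      have h1 : t - ϖstar = (1:ℝ) • (ϖ (k+2) - ϖstar) - (-1:ℝ) • w := by
        rw [hw]; module
      have h2 : (⟪Φ (ϖ (k+2) - ϖstar), w⟫:ℝ) = ⟪ϖ (k+2) - ϖstar, Φ w⟫ := hsa _ _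
      rw [h1, hcomb, h2]
      simp only [haDef]
      ring
    -- σ–absorption of the residual
    have hWσ : ‖w‖^2/(2*β) ≤ (1 - σ)*(⟪Φ w, w⟫:ℝ) := by
      have h1 : (1 - σ)*(⟪Φ w, w⟫:ℝ) = (⟪Φ w, w⟫:ℝ)/(2*β*δ) := by rw [hσdef]; ring
      rw [h1, div_le_div_iff₀ (by positivity) (by positivity)]
      have := mul_le_mul_of_nonneg_left (hcoer w) (by positivity : (0:ℝ) ≤ 2*β)
      linarith
    have hhalf : ‖w‖^2/(2*β) = ‖w‖^2/(4*β) + ‖w‖^2/(4*β) := by ring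
    have hmain : Qa (k+2) ≤ ⟪Φ (t - ϖstar), t - ϖstar⟫ - σ*(⟪Φ w, w⟫:ℝ) := by
      rw [hz_id]; linarith
    -- expansion of the inertial point
    have hT : (⟪Φ (t - ϖstar), t - ϖstar⟫:ℝ)
        = (1+α)*Qa (k+1) - α*Qa k + α*(1+α)*s k := by
      have h1 : t - ϖstar = (1+α) • (ϖ (k+1) - ϖstar) - α • (ϖ k - ϖstar) := by
        rw [hin]; module
      have h2 : s k = Qa (k+1) - 2*⟪Φ (ϖ (k+1) - ϖstar), ϖ k - ϖstar⟫ + Qa k := by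
        have h3 : ϖ (k+1) - ϖ k = (1:ℝ) • (ϖ (k+1) - ϖstar) - (1:ℝ) • (ϖ k - ϖstar) := by
          module
        simp only [hsDef, haDef]
        rw [h3, hcomb]
        ring
      rw [h1, hcomb]
      simp only [haDef] at h2 ⊢
      linear_combination (-(α*(1+α)))*h2
    -- lower bound for ⟪Φ w, w⟫
    have hWlow : (1-α)*s (k+1) - α*(1-α)*s k ≤ (⟪Φ w, w⟫:ℝ) := by
      have hwid : w = α • (ϖ (k+1) - ϖ k) - (1:ℝ) • (ϖ (k+2) - ϖ (k+1)) := by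
        rw [hw, hin]; module
      have hc := hcross (ϖ (k+1) - ϖ k) (ϖ (k+2) - ϖ (k+1))
      have hc' := mul_le_mul_of_nonneg_left hc hα0.le
      rw [hwid, hcomb]
      simp only [hsDef]
      have hidx2 : k+1+1 = k+2 := rfl
      rw [hidx2]
      linarith [hc']
    -- combine
    have hσW := mul_le_mul_of_nonneg_left hWlow hσ0
    have hring : (1+α)*Qa (k+1) - α*Qa k + α*(1+α)*s k
          - σ*((1-α)*s (k+1) - α*(1-α)*s k)
        = (1+α)*Qa (k+1) - α*Qa k + ρ*s k - γ*s (k+1) := by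
      rw [hρdef, hγdef]; ring
    rw [hT] at hmain
    linarith
  -- Lyapunov function
  set θ : ℕ → ℝ := fun k => Qa (k+1) - α * Qa k + ρ * s k with hθDef
  have hθstep : ∀ k, θ (k+1) ≤ θ k - ε * s (k+1) := by
    intro k
    have h := hkey k
    have h1 := mul_le_mul_of_nonneg_right hγρ (hs0 (k+1))
    simp only [hθDef]
    have h2 : (γ - ρ) * s (k+1) = γ * s (k+1) - ρ * s (k+1) := by ring
    linarith [h1, h]
  have hθmono : ∀ k, θ k ≤ θ 0 := by
    intro k
    induction k with
    | zero => exact le_refl _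
    | succ n ih =>
      have h1 := hθstep n
      have h2 := mul_nonneg hε0.le (hs0 (n+1))
      linarith
  set M : ℝ := max (Qa 0) (θ 0 / (1 - α)) with hMdef
  have hMθ : θ 0 ≤ (1-α)*M := by
    have h1 : θ 0/(1-α) ≤ M := le_max_right _ _
    rw [div_le_iff₀ (by linarith)] at h1
    linarith
  have hMa : ∀ k, Qa k ≤ M := by
    intro k
    induction k with
    | zero => exact le_max_left _ _
    | succ n ih =>
      have h1 : Qa (n+1) ≤ α * Qa n + θ n := by
        have := mul_nonneg hρ0 (hs0 n)
        simp only [hθDef]; linarith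
      have h2 := hθmono n
      have h3 := mul_le_mul_of_nonneg_left ih hα0.le
      linarith
  have hθlow : ∀ n, -(α*M) ≤ θ n := by
    intro n
    have h1 := mul_le_mul_of_nonneg_left (hMa n) hα0.le
    have h2 := hQa0 (n+1)
    have h3 := mul_nonneg hρ0 (hs0 n)
    simp only [hθDef]
    linarith
  -- partial sums
  have hpartial : ∀ n, θ n + ε * ∑ i ∈ Finset.range n, s (i+1) ≤ θ 0 := by
    intro n
    induction n with
    | zero => simp
    | succ n ih =>
      rw [Finset.sum_range_succ, mul_add]
      have := hθstep n
      linarith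
  have hsumbound : ∀ n, ∑ i ∈ Finset.range n, s i ≤ s 0 + (θ 0 + α*M)/ε := by
    intro n
    have hnum : 0 ≤ θ 0 + α*M := by have := hθlow 0; linarith
    cases n with
    | zero =>
      simp only [Finset.range_zero, Finset.sum_empty]
      have := hs0 0
      have := div_nonneg hnum hε0.le
      linarith
    | succ n =>
      rw [Finset.sum_range_succ']
      have hp := hpartial n
      have hl := hθlow n
      have h1 : ∑ i ∈ Finset.range n, s (i+1) ≤ (θ 0 + α*M)/ε := by
        rw [le_div_iff₀ hε0]
        linarith
      linarith
  have hsummable : Summable s := summable_of_sum_range_le hs0 hsumbound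
  refine ⟨⟨‖ϖstar‖ + Real.sqrt (M/δ), ?_⟩, hsummable, ?_⟩
  · intro k
    have h1 : δ * ‖ϖ k - ϖstar‖^2 ≤ M := le_trans (hcoer _) (hMa k)
    have h2 : ‖ϖ k - ϖstar‖^2 ≤ M/δ := by rw [le_div_iff₀ hδ]; linarith
    have h3 : ‖ϖ k - ϖstar‖ ≤ Real.sqrt (M/δ) :=
      (Real.le_sqrt (norm_nonneg _) (le_trans (by positivity) h2)).mpr h2
    calc ‖ϖ k‖ = ‖ϖstar + (ϖ k - ϖstar)‖ := by congr 1; abel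
    _ ≤ ‖ϖstar‖ + ‖ϖ k - ϖstar‖ := norm_add_le _ _
    _ ≤ ‖ϖstar‖ + Real.sqrt (M/δ) := by linarith
  · have hst : Filter.Tendsto s Filter.atTop (nhds 0) := hsummable.tendsto_atTop_zero
    have hnorm : ∀ k, ‖ϖ (k+1) - ϖ k‖ ≤ Real.sqrt (s k / δ) := by
      intro k
      have h1 : δ * ‖ϖ (k+1) - ϖ k‖^2 ≤ s k := hcoer _
      have h2 : ‖ϖ (k+1) - ϖ k‖^2 ≤ s k/δ := by rw [le_div_iff₀ hδ]; linarith
      exact (Real.le_sqrt (norm_nonneg _) (div_nonneg (hs0 k) hδ.le)).mpr h2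
    have h2 : Filter.Tendsto (fun k => Real.sqrt (s k / δ)) Filter.atTop (nhds 0) := by
      have hdiv : Filter.Tendsto (fun k => s k / δ) Filter.atTop (nhds 0) := by
        simpa using hst.div_const δ
      have := (Real.continuous_sqrt.tendsto 0).comp hdiv
      simpa [Function.comp_def] using this
    exact tendsto_zero_iff_norm_tendsto_zero.mpr
      (squeeze_zero (fun k => norm_nonneg _) hnorm h2)
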